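/- The graphs 3K₁ + K₃ + K₄ and K₁ + 3K₃ are both (10,8,3)-graphs with 9 edges, while 5K₁ + K₅ is a (10,8,3)-graph with 10 edges; in particular there exist two non-isomorphic minimum (10,8,3)-graphs that are disjoint unions of cliques. -/

import Mathlib

set_option maxRecDepth 10000

open SimpleGraph

/-- `G` is a graph in which every set of `k` vertices contains a clique on `t` vertices. -/
def CliqueInEveryK {V : Type*} [DecidableEq V] (G : SimpleGraph V) (k t : ℕ) : Prop :=
  ∀ s : Finset V, s.card = k → ∃ c ⊆ s, G.IsNClique t c

/-- The number of edges of `G`. -/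
noncomputable def edgeCount {V : Type*} (G : SimpleGraph V) : ℕ := Nat.card G.edgeSet

/-- `3K₁ + K₃ + K₄` on 10 vertices: blocks `{0}`, `{1}`, `{2}`, `{3,4,5}`, `{6,…,9}`. -/
def threeK1plusK3plusK4 : SimpleGraph (Fin 10) :=
  SimpleGraph.fromRel (fun v w =>
    (if (v : ℕ) < 3 then (v : ℕ) else if (v : ℕ) < 6 then 3 else 4) =
    (if (w : ℕ) < 3 then (w : ℕ) else if (w : ℕ) < 6 then 3 else 4))

/-- `K₁ + 3K₃` on 10 vertices: blocks `{0}`, `{1,2,3}`, `{4,5,6}`, `{7,8,9}`. -/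
def K1plus3K3 : SimpleGraph (Fin 10) :=
  SimpleGraph.fromRel (fun v w => ((v : ℕ) + 2) / 3 = ((w : ℕ) + 2) / 3)

/-- `5K₁ + K₅` on 10 vertices: blocks `{0}`, …, `{4}`, `{5,…,9}`. -/
def fiveK1plusK5 : SimpleGraph (Fin 10) :=
  SimpleGraph.fromRel (fun v w =>
    (if (v : ℕ) < 5 then (v : ℕ) else 5) = (if (w : ℕ) < 5 then (w : ℕ) else 5))

section Aux

open Finset

private def E3 (c : Finset (Fin 10)) : Finset (Sym2 (Fin 10)) :=
  c.sym2.filter (fun e => ¬ e.IsDiag)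

private lemma mem_E3 {c : Finset (Fin 10)} {x y : Fin 10} :
    s(x, y) ∈ E3 c ↔ (x ∈ c ∧ y ∈ c) ∧ x ≠ y := by
  simp [E3, Finset.mk_mem_sym2_iff]

private lemma E3_vert {c : Finset (Fin 10)} {x y : Fin 10} (h : s(x, y) ∈ E3 c) :
    x ∈ c ∧ y ∈ c ∧ x ≠ y :=
  ⟨(mem_E3.1 h).1.1, (mem_E3.1 h).1.2, (mem_E3.1 h).2⟩

private lemma E3_subset {G : SimpleGraph (Fin 10)} [DecidableRel G.Adj] {c : Finset (Fin 10)}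
    (h : G.IsNClique 3 c) : E3 c ⊆ G.edgeFinset := by
  intro e
  induction e using Sym2.ind with | _ x y =>
  intro he
  obtain ⟨hx, hy, hxy⟩ := E3_vert he
  simp only [SimpleGraph.mem_edgeFinset, SimpleGraph.mem_edgeSet]
  exact h.1 hx hy hxy

private lemma card_three_of (p q r : Fin 10) (hpq : p ≠ q) (hpr : p ≠ r) (hqr : q ≠ r) :
    ({p, q, r} : Finset (Fin 10)).card = 3 := by
  rw [card_insert_of_notMem (by simp [hpq, hpr]), card_insert_of_notMem (by simp [hqr]),
    card_singleton]

private lemma eq_three {c : Finset (Fin 10)} (hc : c.card = 3) {p q r : Fin 10}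
    (hpq : p ≠ q) (hpr : p ≠ r) (hqr : q ≠ r)
    (hp : p ∈ c) (hq : q ∈ c) (hr : r ∈ c) : c = {p, q, r} := by
  refine (Finset.eq_of_subset_of_card_le ?_ ?_).symm
  · intro x hx; simp only [mem_insert, mem_singleton] at hx
    rcases hx with rfl | rfl | rfl <;> assumption
  · rw [hc, card_three_of p q r hpq hpr hqr]

private lemma E3_card {c : Finset (Fin 10)} (h : c.card = 3) : (E3 c).card = 3 := by
  obtain ⟨x, y, z, hxy, hxz, hyz, rfl⟩ := Finset.card_eq_three.mp h
  have he : E3 {x, y, z} = {s(x, y), s(x, z), s(y, z)} := by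
    ext e
    induction e using Sym2.ind with | _ a b =>
    simp only [mem_E3, mem_insert, mem_singleton, Sym2.eq_iff]
    constructor
    · rintro ⟨⟨(rfl | rfl | rfl), (rfl | rfl | rfl)⟩, hab⟩ <;> tauto
    · rintro ((⟨rfl, rfl⟩ | ⟨rfl, rfl⟩) | (⟨rfl, rfl⟩ | ⟨rfl, rfl⟩) |
        (⟨rfl, rfl⟩ | ⟨rfl, rfl⟩)) <;> simp_all <;> tauto
  rw [he]
  rw [card_insert_of_notMem (by simp [Sym2.eq_iff]; tauto),
    card_insert_of_notMem (by simp [Sym2.eq_iff]; tauto), card_singleton]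

private lemma triangle_eq {c d : Finset (Fin 10)} (hc : c.card = 3) (hd : d.card = 3)
    {e1 e2 : Sym2 (Fin 10)} (hne : e1 ≠ e2)
    (h1c : e1 ∈ E3 c) (h2c : e2 ∈ E3 c) (h1d : e1 ∈ E3 d) (h2d : e2 ∈ E3 d) : c = d := by
  induction e1 using Sym2.ind with | _ x y =>
  induction e2 using Sym2.ind with | _ z w =>
  obtain ⟨hxc, hyc, hxy⟩ := E3_vert h1c
  obtain ⟨hzc, hwc, hzw⟩ := E3_vert h2c
  obtain ⟨hxd, hyd, -⟩ := E3_vert h1d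
  obtain ⟨hzd, hwd, -⟩ := E3_vert h2d
  have hS : ¬((z = x ∨ z = y) ∧ (w = x ∨ w = y)) := by
    rintro ⟨(rfl | rfl), (rfl | rfl)⟩
    · exact hzw rfl
    · exact hne rfl
    · exact hne Sym2.eq_swap
    · exact hzw rfl
  rcases not_and_or.mp hS with hz | hw
  · push_neg at hz
    obtain ⟨hzx, hzy⟩ := hz
    rw [eq_three hc hxy (Ne.symm hzx) (Ne.symm hzy) hxc hyc hzc,
      eq_three hd hxy (Ne.symm hzx) (Ne.symm hzy) hxd hyd hzd]
  · push_neg at hw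
    obtain ⟨hwx, hwy⟩ := hw
    rw [eq_three hc hxy (Ne.symm hwx) (Ne.symm hwy) hxc hyc hwc,
      eq_three hd hxy (Ne.symm hwx) (Ne.symm hwy) hxd hyd hwd]

private lemma E3_disj {c d : Finset (Fin 10)}
    (h : ∀ x, x ∈ c → x ∈ d → ∀ y, y ∈ c → y ∈ d → x = y) :
    Disjoint (E3 c) (E3 d) := by
  rw [Finset.disjoint_left]
  intro e
  induction e using Sym2.ind with | _ x y =>
  intro hec hed
  obtain ⟨hxc, hyc, hxy⟩ := E3_vert hec
  obtain ⟨hxd, hyd, -⟩ := E3_vert hed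
  exact hxy (h x hxc hxd y hyc hyd)

private lemma key {G : SimpleGraph (Fin 10)} [DecidableRel G.Adj] {c1 c2 t : Finset (Fin 10)}
    (hc1 : G.IsNClique 3 c1) (hc2 : G.IsNClique 3 c2) (ht : G.IsNClique 3 t)
    (ht1 : t ≠ c1) (ht2 : t ≠ c2)
    (hsep : ∀ x, x ∈ c1 → x ∈ c2 → x ∉ t) :
    2 ≤ (E3 t \ (E3 c1 ∪ E3 c2)).card := by
  have hb1 : (E3 t ∩ E3 c1).card ≤ 1 := by
    rw [Finset.card_le_one]
    intro e1 he1 e2 he2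
    by_contra hne
    exact ht1 (triangle_eq ht.2 hc1.2 hne (mem_inter.1 he1).1 (mem_inter.1 he2).1
      (mem_inter.1 he1).2 (mem_inter.1 he2).2)
  have hb2 : (E3 t ∩ E3 c2).card ≤ 1 := by
    rw [Finset.card_le_one]
    intro e1 he1 e2 he2
    by_contra hne
    exact ht2 (triangle_eq ht.2 hc2.2 hne (mem_inter.1 he1).1 (mem_inter.1 he2).1
      (mem_inter.1 he1).2 (mem_inter.1 he2).2)
  have hboth : ¬((E3 t ∩ E3 c1).Nonempty ∧ (E3 t ∩ E3 c2).Nonempty) := by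
    rintro ⟨⟨e1, he1⟩, ⟨e2, he2⟩⟩
    obtain ⟨he1t, he1c⟩ := mem_inter.1 he1
    obtain ⟨he2t, he2c⟩ := mem_inter.1 he2
    clear he1 he2
    revert he1t he1c
    induction e1 using Sym2.ind with | _ x y =>
    intro he1t he1c
    revert he2t he2c
    induction e2 using Sym2.ind with | _ z w =>
    intro he2t he2c
    obtain ⟨hxt, hyt, hxy⟩ := E3_vert he1t
    obtain ⟨hxc, hyc, -⟩ := E3_vert he1c
    obtain ⟨hzt, hwt, hzw⟩ := E3_vert he2t
    obtain ⟨hzc, hwc, -⟩ := E3_vert he2c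
    have hxz : x ≠ z := fun h => hsep x hxc (h ▸ hzc) hxt
    have hxw : x ≠ w := fun h => hsep x hxc (h ▸ hwc) hxt
    have hyz : y ≠ z := fun h => hsep y hyc (h ▸ hzc) hyt
    have hyw : y ≠ w := fun h => hsep y hyc (h ▸ hwc) hyt
    have h4 : ({x, y, z, w} : Finset (Fin 10)).card = 4 := by
      rw [card_insert_of_notMem (by simp [hxy, hxz, hxw]),
        card_insert_of_notMem (by simp [hyz, hyw]),
        card_insert_of_notMem (by simp [hzw]), card_singleton]
    have hsub : ({x, y, z, w} : Finset (Fin 10)) ⊆ t := by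
      intro i hi
      simp only [mem_insert, mem_singleton] at hi
      rcases hi with rfl | rfl | rfl | rfl <;> assumption
    have := Finset.card_le_card hsub
    rw [h4, ht.2] at this
    omega
  have hint : (E3 t ∩ (E3 c1 ∪ E3 c2)).card ≤ 1 := by
    rw [Finset.inter_union_distrib_left]
    rcases Finset.eq_empty_or_nonempty (E3 t ∩ E3 c1) with hA | hA
    · rw [hA, empty_union]; exact hb2
    rcases Finset.eq_empty_or_nonempty (E3 t ∩ E3 c2) with hB | hB
    · rw [hB, union_empty]; exact hb1
    · exact absurd ⟨hA, hB⟩ hboth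
  have hsum := Finset.card_inter_add_card_sdiff (E3 t) (E3 c1 ∪ E3 c2)
  rw [E3_card ht.2] at hsum
  omega

private lemma branch {G : SimpleGraph (Fin 10)} [DecidableRel G.Adj]
    (h8 : G.edgeFinset.card ≤ 8)
    {c1 c2 : Finset (Fin 10)} (hc1 : G.IsNClique 3 c1) (hc2 : G.IsNClique 3 c2)
    (hvv : ∀ x, x ∈ c1 → x ∈ c2 → ∀ y, y ∈ c1 → y ∈ c2 → x = y)
    {d0 : Finset (Fin 10)} (hd0 : G.IsNClique 3 d0) (hd01 : d0 ≠ c1) (hd02 : d0 ≠ c2)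
    (hsep0 : ∀ x, x ∈ c1 → x ∈ c2 → x ∉ d0)
    {t : Finset (Fin 10)} (ht : G.IsNClique 3 t) (ht1 : t ≠ c1) (ht2 : t ≠ c2)
    (hsept : ∀ x, x ∈ c1 → x ∈ c2 → x ∉ t) :
    t = d0 := by
  have hdisjE : Disjoint (E3 c1) (E3 c2) := E3_disj hvv
  have hUsub : E3 c1 ∪ E3 c2 ⊆ G.edgeFinset := union_subset (E3_subset hc1) (E3_subset hc2)
  have hUcard : (E3 c1 ∪ E3 c2).card = 6 := by
    rw [card_union_of_disjoint hdisjE, E3_card hc1.2, E3_card hc2.2]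
  have hR : (G.edgeFinset \ (E3 c1 ∪ E3 c2)).card ≤ 2 := by
    rw [card_sdiff_of_subset hUsub, hUcard]; omega
  have hS0 : 2 ≤ (E3 d0 \ (E3 c1 ∪ E3 c2)).card := key hc1 hc2 hd0 hd01 hd02 hsep0
  have hSt : 2 ≤ (E3 t \ (E3 c1 ∪ E3 c2)).card := key hc1 hc2 ht ht1 ht2 hsept
  have hsub0 : E3 d0 \ (E3 c1 ∪ E3 c2) ⊆ G.edgeFinset \ (E3 c1 ∪ E3 c2) :=
    sdiff_subset_sdiff (E3_subset hd0) Subset.rfl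
  have hsubt : E3 t \ (E3 c1 ∪ E3 c2) ⊆ G.edgeFinset \ (E3 c1 ∪ E3 c2) :=
    sdiff_subset_sdiff (E3_subset ht) Subset.rfl
  have hcs0 := Finset.card_le_card hsub0
  have he0 : E3 d0 \ (E3 c1 ∪ E3 c2) = G.edgeFinset \ (E3 c1 ∪ E3 c2) :=
    Finset.eq_of_subset_of_card_le hsub0 (by omega)
  have het : E3 t \ (E3 c1 ∪ E3 c2) = G.edgeFinset \ (E3 c1 ∪ E3 c2) :=
    Finset.eq_of_subset_of_card_le hsubt (by omega)
  have h1lt : 1 < (G.edgeFinset \ (E3 c1 ∪ E3 c2)).card := by omega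
  obtain ⟨e1, he1, e2, he2, hne⟩ := Finset.one_lt_card.mp h1lt
  have he1t : e1 ∈ E3 t := (mem_sdiff.1 (by rw [het]; exact he1)).1
  have he2t : e2 ∈ E3 t := (mem_sdiff.1 (by rw [het]; exact he2)).1
  have he1d : e1 ∈ E3 d0 := (mem_sdiff.1 (by rw [he0]; exact he1)).1
  have he2d : e2 ∈ E3 d0 := (mem_sdiff.1 (by rw [he0]; exact he2)).1
  exact triangle_eq ht.2 hd0.2 hne he1t he2t he1d he2d

private lemma third {G : SimpleGraph (Fin 10)} [DecidableRel G.Adj]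
    (h8 : G.edgeFinset.card ≤ 8)
    {c1 c2 : Finset (Fin 10)} (hc1 : G.IsNClique 3 c1) (hc2 : G.IsNClique 3 c2)
    (hvv : ∀ x, x ∈ c1 → x ∈ c2 → ∀ y, y ∈ c1 → y ∈ c2 → x = y)
    {d0 : Finset (Fin 10)} (hd0 : G.IsNClique 3 d0) (hd01 : d0 ≠ c1) (hd02 : d0 ≠ c2)
    (hsep0 : ∀ x, x ∈ c1 → x ∈ c2 → x ∉ d0) :
    ∃ e, e ∈ E3 d0 ∩ (E3 c1 ∪ E3 c2) := by
  have hdisjE : Disjoint (E3 c1) (E3 c2) := E3_disj hvv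
  have hUsub : E3 c1 ∪ E3 c2 ⊆ G.edgeFinset := union_subset (E3_subset hc1) (E3_subset hc2)
  have hUcard : (E3 c1 ∪ E3 c2).card = 6 := by
    rw [card_union_of_disjoint hdisjE, E3_card hc1.2, E3_card hc2.2]
  have hR : (G.edgeFinset \ (E3 c1 ∪ E3 c2)).card ≤ 2 := by
    rw [card_sdiff_of_subset hUsub, hUcard]; omega
  have hsub0 : E3 d0 \ (E3 c1 ∪ E3 c2) ⊆ G.edgeFinset \ (E3 c1 ∪ E3 c2) :=
    sdiff_subset_sdiff (E3_subset hd0) Subset.rfl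
  have hcs0 := Finset.card_le_card hsub0
  have hsum := Finset.card_inter_add_card_sdiff (E3 d0) (E3 c1 ∪ E3 c2)
  rw [E3_card hd0.2] at hsum
  have : 0 < (E3 d0 ∩ (E3 c1 ∪ E3 c2)).card := by omega
  exact Finset.card_pos.mp this

private lemma tri_of {G : SimpleGraph (Fin 10)} (hG : CliqueInEveryK G 8 3) :
    ∀ u v : Fin 10, u ≠ v → ∃ c, G.IsNClique 3 c ∧ u ∉ c ∧ v ∉ c := by
  intro u v huv
  have hcard : (Finset.univ \ {u, v} : Finset (Fin 10)).card = 8 := by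
    rw [Finset.card_sdiff_of_subset (Finset.subset_univ _)]
    rw [card_insert_of_notMem (by simp [huv]), card_singleton]
    simp
  obtain ⟨c, hcs, hc⟩ := hG _ hcard
  refine ⟨c, hc, fun hu => ?_, fun hv => ?_⟩
  · have := hcs hu; simp at this
  · have := hcs hv; simp at this

private lemma lower_aux {G : SimpleGraph (Fin 10)} [DecidableRel G.Adj]
    (hG : CliqueInEveryK G 8 3) : 9 ≤ G.edgeFinset.card := by
  by_contra hlt
  push_neg at hlt
  have h8 : G.edgeFinset.card ≤ 8 := by omega
  have tri := tri_of hG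
  obtain ⟨c1, hc1, -, -⟩ := tri 0 1 (by decide)
  obtain ⟨a, b, c, hab, hac, hbc, rfl⟩ := Finset.card_eq_three.mp hc1.2
  obtain ⟨c2, hc2, ha2, hb2⟩ := tri a b hab
  have haC : a ∈ ({a, b, c} : Finset (Fin 10)) := by simp
  have hbC : b ∈ ({a, b, c} : Finset (Fin 10)) := by simp
  have hcC : c ∈ ({a, b, c} : Finset (Fin 10)) := by simp
  by_cases hcc : c ∈ c2
  · -- Case B : c1 ∩ c2 = {c}
    have hvv : ∀ x, x ∈ ({a, b, c} : Finset (Fin 10)) → x ∈ c2 →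
        ∀ y, y ∈ ({a, b, c} : Finset (Fin 10)) → y ∈ c2 → x = y := by
      intro x hx1 hx2 y hy1 hy2
      simp only [mem_insert, mem_singleton] at hx1 hy1
      rcases hx1 with rfl | rfl | rfl
      · exact absurd hx2 ha2
      · exact absurd hx2 hb2
      rcases hy1 with rfl | rfl | rfl
      · exact absurd hy2 ha2
      · exact absurd hy2 hb2
      · rfl
    obtain ⟨d0, hd0, hcd0, had0⟩ := tri c a (Ne.symm hac)
    have hd01 : d0 ≠ ({a, b, c} : Finset (Fin 10)) := fun h => hcd0 (by rw [h]; exact hcC)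
    have hd02 : d0 ≠ c2 := fun h => hcd0 (by rw [h]; exact hcc)
    have hsep0 : ∀ x, x ∈ ({a, b, c} : Finset (Fin 10)) → x ∈ c2 → x ∉ d0 := by
      intro x hx1 hx2
      simp only [mem_insert, mem_singleton] at hx1
      rcases hx1 with rfl | rfl | rfl
      · exact absurd hx2 ha2
      · exact absurd hx2 hb2
      · exact hcd0
    obtain ⟨z, hz⟩ := Finset.card_pos.mp (show 0 < d0.card by rw [hd0.2]; omega)
    have hcz : c ≠ z := fun h => hcd0 (h ▸ hz)
    obtain ⟨t, ht, hct, hzt⟩ := tri c z hcz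
    have ht1 : t ≠ ({a, b, c} : Finset (Fin 10)) := fun h => hct (by rw [h]; exact hcC)
    have ht2 : t ≠ c2 := fun h => hct (by rw [h]; exact hcc)
    have hsept : ∀ x, x ∈ ({a, b, c} : Finset (Fin 10)) → x ∈ c2 → x ∉ t := by
      intro x hx1 hx2
      simp only [mem_insert, mem_singleton] at hx1
      rcases hx1 with rfl | rfl | rfl
      · exact absurd hx2 ha2
      · exact absurd hx2 hb2
      · exact hct
    have heq := branch h8 hc1 hc2 hvv hd0 hd01 hd02 hsep0 ht ht1 ht2 hsept
    exact hzt (by rw [heq]; exact hz)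
  · -- Case A : c1 and c2 disjoint
    have hdisj12 : ∀ x, x ∈ ({a, b, c} : Finset (Fin 10)) → x ∉ c2 := by
      intro x hx
      simp only [mem_insert, mem_singleton] at hx
      rcases hx with rfl | rfl | rfl
      exacts [ha2, hb2, hcc]
    have hvv : ∀ x, x ∈ ({a, b, c} : Finset (Fin 10)) → x ∈ c2 →
        ∀ y, y ∈ ({a, b, c} : Finset (Fin 10)) → y ∈ c2 → x = y := by
      intro x hx1 hx2 _ _ _
      exact absurd hx2 (hdisj12 x hx1)
    obtain ⟨d, hd⟩ := Finset.card_pos.mp (show 0 < c2.card by rw [hc2.2]; omega)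
    have had : a ≠ d := fun h => (hdisj12 a haC) (h ▸ hd)
    obtain ⟨d0, hd0, had0, hdd0⟩ := tri a d had
    have hd01 : d0 ≠ ({a, b, c} : Finset (Fin 10)) := fun h => had0 (by rw [h]; exact haC)
    have hd02 : d0 ≠ c2 := fun h => hdd0 (by rw [h]; exact hd)
    have hsep0 : ∀ x, x ∈ ({a, b, c} : Finset (Fin 10)) → x ∈ c2 → x ∉ d0 := by
      intro x hx1 hx2
      exact absurd hx2 (hdisj12 x hx1)
    obtain ⟨f0, hf0⟩ := third h8 hc1 hc2 hvv hd0 hd01 hd02 hsep0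
    obtain ⟨hf0d, hf0U⟩ := mem_inter.1 hf0
    clear hf0
    rcases mem_union.1 hf0U with hf1 | hf2
    · -- third edge inside c1
      revert hf0d hf1
      induction f0 using Sym2.ind with | _ x0 y0 =>
      intro hf0d hf1
      obtain ⟨hx1, -, -⟩ := E3_vert hf1
      obtain ⟨hxd0, -, -⟩ := E3_vert hf0d
      have hxd : x0 ≠ d := fun h => (hdisj12 x0 hx1) (h ▸ hd)
      obtain ⟨t, ht, hxt, hdt⟩ := tri x0 d hxd
      have ht1 : t ≠ ({a, b, c} : Finset (Fin 10)) := fun h => hxt (by rw [h]; exact hx1)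
      have ht2 : t ≠ c2 := fun h => hdt (by rw [h]; exact hd)
      have hsept : ∀ x, x ∈ ({a, b, c} : Finset (Fin 10)) → x ∈ c2 → x ∉ t := by
        intro x hx1' hx2'
        exact absurd hx2' (hdisj12 x hx1')
      have heq := branch h8 hc1 hc2 hvv hd0 hd01 hd02 hsep0 ht ht1 ht2 hsept
      exact hxt (by rw [heq]; exact hxd0)
    · -- third edge inside c2
      revert hf0d hf2
      induction f0 using Sym2.ind with | _ x0 y0 =>
      intro hf0d hf2
      obtain ⟨hx2, -, -⟩ := E3_vert hf2
      obtain ⟨hxd0, -, -⟩ := E3_vert hf0d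
      have hxa : x0 ≠ a := fun h => (hdisj12 a haC) (h ▸ hx2)
      obtain ⟨t, ht, hxt, hat⟩ := tri x0 a hxa
      have ht1 : t ≠ ({a, b, c} : Finset (Fin 10)) := fun h => hat (by rw [h]; exact haC)
      have ht2 : t ≠ c2 := fun h => hxt (by rw [h]; exact hx2)
      have hsept : ∀ x, x ∈ ({a, b, c} : Finset (Fin 10)) → x ∈ c2 → x ∉ t := by
        intro x hx1' hx2'
        exact absurd hx2' (hdisj12 x hx1')
      have heq := branch h8 hc1 hc2 hvv hd0 hd01 hd02 hsep0 ht ht1 ht2 hsept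
      exact hxt (by rw [heq]; exact hxd0)


instance : DecidableRel threeK1plusK3plusK4.Adj := fun a b =>
  decidable_of_iff _ (fromRel_adj _ a b).symm
instance : DecidableRel K1plus3K3.Adj := fun a b =>
  decidable_of_iff _ (fromRel_adj _ a b).symm
instance : DecidableRel fiveK1plusK5.Adj := fun a b =>
  decidable_of_iff _ (fromRel_adj _ a b).symm

private lemma edgeCount_eq (G : SimpleGraph (Fin 10)) [DecidableRel G.Adj] :
    edgeCount G = G.edgeFinset.card := by
  rw [edgeCount, Nat.card_eq_fintype_card, ← Set.toFinset_card]
  congr 1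

private lemma cliqueInEveryK_of (G : SimpleGraph (Fin 10))
    (H : ∀ u v : Fin 10, ∃ c, G.IsNClique 3 c ∧ u ∉ c ∧ v ∉ c) :
    CliqueInEveryK G 8 3 := by
  intro s hs
  have hcard : (Finset.univ \ s).card = 2 := by
    rw [Finset.card_sdiff_of_subset (Finset.subset_univ s), hs]
    simp
  obtain ⟨u, v, huv, hcompl⟩ := Finset.card_eq_two.mp hcard
  obtain ⟨c, hc, hu, hv⟩ := H u v
  refine ⟨c, ?_, hc⟩
  intro x hx
  by_contra hxs
  have hx2 : x ∈ Finset.univ \ s := Finset.mem_sdiff.2 ⟨Finset.mem_univ x, hxs⟩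
  rw [hcompl] at hx2
  simp only [Finset.mem_insert, Finset.mem_singleton] at hx2
  rcases hx2 with rfl | rfl
  · exact hu hx
  · exact hv hx

private lemma clique1 : CliqueInEveryK threeK1plusK3plusK4 8 3 := by
  refine cliqueInEveryK_of _ (fun u v => ?_)
  have h2 : ∀ u v : Fin 10, ∃ c ∈ ([{3,4,5},{6,7,8},{6,7,9},{6,8,9},{7,8,9}] :
      List (Finset (Fin 10))), u ∉ c ∧ v ∉ c := by decide
  have h1 : ∀ c ∈ ([{3,4,5},{6,7,8},{6,7,9},{6,8,9},{7,8,9}] : List (Finset (Fin 10))),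
      threeK1plusK3plusK4.IsNClique 3 c := by
    intro c hc
    fin_cases hc <;>
      (rw [SimpleGraph.is3Clique_triple_iff]; exact ⟨by decide, by decide, by decide⟩)
  obtain ⟨c, hcL, hu, hv⟩ := h2 u v
  exact ⟨c, h1 c hcL, hu, hv⟩

private lemma clique2 : CliqueInEveryK K1plus3K3 8 3 := by
  refine cliqueInEveryK_of _ (fun u v => ?_)
  have h2 : ∀ u v : Fin 10, ∃ c ∈ ([{1,2,3},{4,5,6},{7,8,9}] :
      List (Finset (Fin 10))), u ∉ c ∧ v ∉ c := by decide
  have h1 : ∀ c ∈ ([{1,2,3},{4,5,6},{7,8,9}] : List (Finset (Fin 10))),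
      K1plus3K3.IsNClique 3 c := by
    intro c hc
    fin_cases hc <;>
      (rw [SimpleGraph.is3Clique_triple_iff]; exact ⟨by decide, by decide, by decide⟩)
  obtain ⟨c, hcL, hu, hv⟩ := h2 u v
  exact ⟨c, h1 c hcL, hu, hv⟩

private lemma clique3 : CliqueInEveryK fiveK1plusK5 8 3 := by
  refine cliqueInEveryK_of _ (fun u v => ?_)
  have h2 : ∀ u v : Fin 10, ∃ c ∈ ([{5,6,7},{5,6,8},{5,6,9},{5,7,8},{5,7,9},{5,8,9},
      {6,7,8},{6,7,9},{6,8,9},{7,8,9}] : List (Finset (Fin 10))), u ∉ c ∧ v ∉ c := by decide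
  have h1 : ∀ c ∈ ([{5,6,7},{5,6,8},{5,6,9},{5,7,8},{5,7,9},{5,8,9},
      {6,7,8},{6,7,9},{6,8,9},{7,8,9}] : List (Finset (Fin 10))),
      fiveK1plusK5.IsNClique 3 c := by
    intro c hc
    fin_cases hc <;>
      (rw [SimpleGraph.is3Clique_triple_iff]; exact ⟨by decide, by decide, by decide⟩)
  obtain ⟨c, hcL, hu, hv⟩ := h2 u v
  exact ⟨c, h1 c hcL, hu, hv⟩

private lemma ec1 : edgeCount threeK1plusK3plusK4 = 9 := by
  rw [edgeCount_eq]; decide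

private lemma ec2 : edgeCount K1plus3K3 = 9 := by
  rw [edgeCount_eq]; decide

private lemma ec3 : edgeCount fiveK1plusK5 = 10 := by
  rw [edgeCount_eq]; decide

private lemma noniso : IsEmpty (threeK1plusK3plusK4 ≃g K1plus3K3) := by
  refine ⟨fun φ => ?_⟩
  have hno : ∀ p q r s : Fin 10, ¬(K1plus3K3.Adj p q ∧ K1plus3K3.Adj p r ∧
      K1plus3K3.Adj p s ∧ K1plus3K3.Adj q r ∧ K1plus3K3.Adj q s ∧ K1plus3K3.Adj r s) := by
    decide
  refine hno (φ 6) (φ 7) (φ 8) (φ 9) ⟨?_, ?_, ?_, ?_, ?_, ?_⟩ <;>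
    exact φ.map_rel_iff.2 (by decide)


end Aux

/-- `3K₁ + K₃ + K₄` and `K₁ + 3K₃` are `(10,8,3)`-graphs with 9 edges, `5K₁ + K₅` is a
`(10,8,3)`-graph with 10 edges, every `(10,8,3)`-graph has at least 9 edges, and the
first two are non-isomorphic: there exist two non-isomorphic minimum `(10,8,3)`-graphs
that are disjoint unions of cliques. -/
theorem stmt_19 :
    CliqueInEveryK threeK1plusK3plusK4 8 3 ∧ CliqueInEveryK K1plus3K3 8 3 ∧
    CliqueInEveryK fiveK1plusK5 8 3 ∧
    edgeCount threeK1plusK3plusK4 = 9 ∧ edgeCount K1plus3K3 = 9 ∧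
    edgeCount fiveK1plusK5 = 10 ∧
    (∀ G : SimpleGraph (Fin 10), CliqueInEveryK G 8 3 → 9 ≤ edgeCount G) ∧
    IsEmpty (threeK1plusK3plusK4 ≃g K1plus3K3) := by
  refine ⟨clique1, clique2, clique3, ec1, ec2, ec3, ?_, noniso⟩
  intro G hG
  classical
  rw [edgeCount_eq]
  exact lower_aux hG
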